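/- Let μ, s, ω, σ ∈ ℝ, γ > 0, let rₑ > 0 satisfy μ + s·rₑ² − rₑ⁴ = 0, and let θ₀ ∈ ℝ. Define z : ℝ → ℂ by z(t) = rₑ · exp( i·(θ₀ + γ·(ω + σ·s·rₑ²)·t) ). Then for every t ∈ ℝ, z is differentiable at t with z′(t) = γ·((μ + iω)·z(t) + s·(1 + iσ)·|z(t)|²·z(t) − |z(t)|⁴·z(t)); i.e., uniform rotation on the circle of radius rₑ with angular velocity γ·(ω + σ·s·rₑ²) is an exact solution of the noise-free augmented Bautin normal form, so each positive equilibrium radius of the radial equation gives rise to a limit cycle of the planar system. -/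

import Mathlib

/-- If rₑ > 0 satisfies μ + s·rₑ² − rₑ⁴ = 0, then uniform rotation
z(t) = rₑ·exp(i(θ₀ + γ(ω + σ·s·rₑ²)t)) is an exact solution of the noise-free augmented
Bautin normal form. -/
theorem bautin_limit_cycle_solution (μ s ω σ γ : ℝ) (hγ : 0 < γ)
    (re : ℝ) (hre : 0 < re) (heq : μ + s * re^2 - re^4 = 0) (θ₀ : ℝ) :
    ∀ t : ℝ, HasDerivAt
      (fun τ : ℝ => (re : ℂ) * Complex.exp (Complex.I
        * ((θ₀ : ℂ) + (γ : ℂ) * ((ω : ℂ) + (σ : ℂ) * (s : ℂ) * (re : ℂ)^2) * (τ : ℂ))))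
      ((γ : ℂ) * (((μ : ℂ) + (ω : ℂ) * Complex.I)
          * ((re : ℂ) * Complex.exp (Complex.I
            * ((θ₀ : ℂ) + (γ : ℂ) * ((ω : ℂ) + (σ : ℂ) * (s : ℂ) * (re : ℂ)^2) * (t : ℂ))))
        + (s : ℂ) * (1 + (σ : ℂ) * Complex.I)
          * (‖(re : ℂ) * Complex.exp (Complex.I
            * ((θ₀ : ℂ) + (γ : ℂ) * ((ω : ℂ) + (σ : ℂ) * (s : ℂ) * (re : ℂ)^2) * (t : ℂ)))‖ : ℂ)^2
          * ((re : ℂ) * Complex.exp (Complex.I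
            * ((θ₀ : ℂ) + (γ : ℂ) * ((ω : ℂ) + (σ : ℂ) * (s : ℂ) * (re : ℂ)^2) * (t : ℂ))))
        - (‖(re : ℂ) * Complex.exp (Complex.I
            * ((θ₀ : ℂ) + (γ : ℂ) * ((ω : ℂ) + (σ : ℂ) * (s : ℂ) * (re : ℂ)^2) * (t : ℂ)))‖ : ℂ)^4
          * ((re : ℂ) * Complex.exp (Complex.I
            * ((θ₀ : ℂ) + (γ : ℂ) * ((ω : ℂ) + (σ : ℂ) * (s : ℂ) * (re : ℂ)^2) * (t : ℂ)))))) t := by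
  intro t
  set a : ℂ := (γ : ℂ) * ((ω : ℂ) + (σ : ℂ) * (s : ℂ) * (re : ℂ)^2) with ha
  have h0 : HasDerivAt (fun τ : ℝ => (τ : ℂ)) 1 t := by
    simpa using (hasDerivAt_id t).ofReal_comp
  have hD : HasDerivAt
      (fun τ : ℝ => (re : ℂ) * Complex.exp (Complex.I * ((θ₀ : ℂ) + a * (τ : ℂ))))
      ((re : ℂ) * (Complex.exp (Complex.I * ((θ₀ : ℂ) + a * (t : ℂ))) * (Complex.I * (a * 1)))) t :=
    ((((h0.const_mul a).const_add (θ₀ : ℂ)).const_mul Complex.I).cexp).const_mul (re : ℂ)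
  have hnorm : ‖(re : ℂ) * Complex.exp (Complex.I * ((θ₀ : ℂ) + a * (t : ℂ)))‖ = re := by
    have harg : Complex.I * ((θ₀ : ℂ) + a * (t : ℂ))
        = ((θ₀ + γ * (ω + σ * s * re ^ 2) * t : ℝ) : ℂ) * Complex.I := by
      rw [ha]; push_cast; ring
    rw [norm_mul, harg, Complex.norm_exp_ofReal_mul_I, mul_one, Complex.norm_real,
      Real.norm_eq_abs, abs_of_pos hre]
  have heqC : (μ : ℂ) + (s : ℂ) * (re : ℂ)^2 - (re : ℂ)^4 = 0 := by exact_mod_cast heq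
  convert hD using 1
  rw [hnorm]
  push_cast
  linear_combination (γ : ℂ) *
    Complex.exp (Complex.I * ((θ₀ : ℂ) + a * (t : ℂ))) * (re : ℂ) * heqC
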